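/- arXiv:math/0405543 — 2 statements merged into one kernel-verified Lean document; each statement's English description precedes it below -/
import Mathlib

section
/- The Carlitz polynomials satisfy the K-binomial identity e_i(st) = Σ_{n=0}^{i} (i choose n)_K · e_n(t) · (e_{i-n}(s))^{q^n} for all s, t, where (i choose n)_K = D_i / (D_n D_{i-n}^{q^n}). -/
noncomputable section

/-- `[i] = x^{q^i} - x`. -/
def brk {K : Type*} [CommRing K] (q : ℕ) (x : K) (i : ℕ) : K := x ^ q ^ i - x

/-- Carlitz factorial: `D_0 = 1`, `D_i = [i] D_{i-1}^q`. -/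
def Dfac {K : Type*} [CommRing K] (q : ℕ) (x : K) : ℕ → K
  | 0 => 1
  | i + 1 => brk q x (i + 1) * (Dfac q x i) ^ q

/-- The `K`-binomial coefficient `(i choose n)_K = D_i / (D_n D_{i-n}^{q^n})`. -/
def kBinom {K : Type*} [Field K] (q : ℕ) (x : K) (i n : ℕ) : K :=
  Dfac q x i / (Dfac q x n * (Dfac q x (i - n)) ^ q ^ n)

/-- The Carlitz polynomial `e_i(t) = ∏_{m ∈ F_q[x], deg m < i} (t - m)`. -/
def carlitzE (F : Type*) [Field F] [Fintype F] {K : Type*} [Field K] [Algebra F K]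
    (x : K) (i : ℕ) : Polynomial K :=
  ∏ c : Fin i → F,
    (Polynomial.X - Polynomial.C (∑ j : Fin i, algebraMap F K (c j) * x ^ (j : ℕ)))

namespace CarlitzAux

open Polynomial

theorem myprod (F : Type*) [Field F] [Fintype F] :
    ∏ a : F, (X - C a) = X ^ Fintype.card F - X := by
  have h2 : 1 < Fintype.card F := Fintype.one_lt_card
  have h1 : (X ^ Fintype.card F - X : F[X]).Monic := by
    obtain ⟨m, hm⟩ : ∃ m, Fintype.card F = m + 1 := ⟨Fintype.card F - 1, by omega⟩
    rw [hm]; apply monic_X_pow_sub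
    rw [degree_X]; exact_mod_cast (by omega : (1:ℕ) < m + 1)
  have hroots := FiniteField.roots_X_pow_card_sub_X F
  have hcard : Multiset.card (X ^ Fintype.card F - X : F[X]).roots
      = (X ^ Fintype.card F - X : F[X]).natDegree := by
    rw [hroots, FiniteField.X_pow_card_sub_X_natDegree_eq F h2]
    simp [Finset.card_univ]
  have h3 := prod_multiset_X_sub_C_of_monic_of_roots_card_eq h1 hcard
  rw [← h3, hroots]
  rfl

section
variable {F : Type*} [Field F] [Fintype F]
local notation "K" => RatFunc F
local notation "φ" => algebraMap F (RatFunc F)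
local notation "x" => (RatFunc.X : RatFunc F)
local notation "Q" => Fintype.card F

theorem prod_lin (z : RatFunc F) :
    ∏ a : F, (z - φ a) = z ^ Q - z := by
  have := congrArg (aeval z) (myprod F)
  simpa [map_prod] using this

theorem prod_lin_mul (z c : RatFunc F) :
    ∏ a : F, (z - φ a * c) = z ^ Q - c ^ (Q - 1) * z := by
  rcases eq_or_ne c 0 with rfl | hc
  · simp [Finset.prod_const, zero_pow, Nat.sub_ne_zero_of_lt Fintype.one_lt_card]
  · obtain ⟨m, hm⟩ : ∃ m, Fintype.card F = m + 1 :=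
      ⟨Fintype.card F - 1, by have := Fintype.one_lt_card (α := F); omega⟩
    calc ∏ a : F, (z - φ a * c)
        = ∏ a : F, (c * (z / c - φ a)) := by
          refine Finset.prod_congr rfl fun a _ => ?_
          field_simp [mul_comm]
      _ = c ^ Q * ∏ a : F, (z / c - φ a) := by
          rw [Finset.prod_mul_distrib, Finset.prod_const, Finset.card_univ]
      _ = c ^ Q * ((z / c) ^ Q - z / c) := by rw [prod_lin]
      _ = z ^ Q - c ^ (Q - 1) * z := by
          rw [hm]; simp only [Nat.add_sub_cancel]
          rw [div_pow, mul_sub, mul_div_cancel₀ _ (pow_ne_zero _ hc), pow_succ c m]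
          field_simp

theorem ratfunc_char : ∃ p : ℕ, p.Prime ∧ CharP (RatFunc F) p ∧ ∃ m : ℕ, Fintype.card F = p ^ m := by
  obtain ⟨p, hpc⟩ := CharP.exists F
  have hp : p.Prime := CharP.char_is_prime F p
  haveI : Fact p.Prime := ⟨hp⟩
  obtain ⟨m, hm⟩ := FiniteField.card F p
  exact ⟨p, hp, charP_of_injective_algebraMap (algebraMap F (RatFunc F)).injective p,
    ⟨m, hm.2⟩⟩

theorem frob_add (u v : RatFunc F) (n : ℕ) :
    (u + v) ^ Q ^ n = u ^ Q ^ n + v ^ Q ^ n := by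
  obtain ⟨p, hp, hchar, m, hm⟩ := ratfunc_char (F := F)
  haveI : Fact p.Prime := ⟨hp⟩
  rw [hm, ← pow_mul, add_pow_char_pow, pow_mul]

theorem frob_add1 (u v : RatFunc F) : (u + v) ^ Q = u ^ Q + v ^ Q := by
  have := frob_add (F := F) u v 1
  simpa using this

theorem frob_sum {ι : Type*} (s : Finset ι) (f : ι → RatFunc F) (n : ℕ) :
    (∑ i ∈ s, f i) ^ Q ^ n = ∑ i ∈ s, f i ^ Q ^ n := by
  obtain ⟨p, hp, hchar, m, hm⟩ := ratfunc_char (F := F)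
  haveI : Fact p.Prime := ⟨hp⟩
  rw [hm, ← pow_mul, sum_pow_char_pow]

theorem frob_sub (u v : RatFunc F) (n : ℕ) :
    (u - v) ^ Q ^ n = u ^ Q ^ n - v ^ Q ^ n := by
  obtain ⟨p, hp, hchar, m, hm⟩ := ratfunc_char (F := F)
  haveI : Fact p.Prime := ⟨hp⟩
  rw [hm, ← pow_mul, sub_pow_char_pow]

theorem frob_neg_one : ((-1 : RatFunc F)) ^ Q = -1 := by
  obtain ⟨p, hp, hchar, m, hm⟩ := ratfunc_char (F := F)
  haveI : Fact p.Prime := ⟨hp⟩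
  rw [hm, neg_one_pow_char_pow]

theorem frob_neg_one_sub : ((-1 : RatFunc F)) ^ (Q - 1) = 1 := by
  have h := frob_neg_one (F := F)
  obtain ⟨m, hm⟩ : ∃ m, Fintype.card F = m + 1 :=
    ⟨Fintype.card F - 1, by have := Fintype.one_lt_card (α := F); omega⟩
  rw [hm, pow_succ] at h
  rw [hm, Nat.add_sub_cancel]
  have h2 : ((-1 : RatFunc F)) ^ m * (-1) = 1 * (-1) := by rw [h]; ring
  exact mul_right_cancel₀ (neg_ne_zero.mpr one_ne_zero) h2

theorem algebraMap_pow_card (a : F) : (φ a) ^ Q = φ a := by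
  rw [← map_pow, FiniteField.pow_card]

theorem eval_carlitzE (i : ℕ) (u : K) :
    (carlitzE F x i).eval u
      = ∏ c : Fin i → F, (u - ∑ j : Fin i, φ (c j) * x ^ (j : ℕ)) := by
  simp [carlitzE, Polynomial.eval_prod, Polynomial.eval_finset_sum]

theorem E_zero (u : K) : (carlitzE F x 0).eval u = u := by
  simp [eval_carlitzE]

theorem decomp1 (i : ℕ) (u : K) :
    (carlitzE F x (i+1)).eval u
      = ∏ a : F, (carlitzE F x i).eval (u - φ a * x ^ i) := by
  simp only [eval_carlitzE]
  rw [← Fintype.prod_prod_type']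
  apply Fintype.prod_equiv (Fin.snocEquiv (fun _ => F)).symm
  intro c
  simp only [Fin.snocEquiv, Equiv.coe_fn_symm_mk, Fin.init]
  rw [Fin.sum_univ_castSucc]
  simp only [Fin.coe_castSucc, Fin.val_last]
  ring

theorem decomp2 (i : ℕ) (u : K) :
    (carlitzE F x (i+1)).eval u
      = ∏ a : F, (x ^ Q ^ i * (carlitzE F x i).eval ((u - φ a) * x⁻¹)) := by
  have hx : (x : K) ≠ 0 := RatFunc.X_ne_zero
  simp only [eval_carlitzE]
  have step : ∀ a : F,
      (x : K) ^ Q ^ i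
          * ∏ c : Fin i → F, ((u - φ a) * x⁻¹ - ∑ j : Fin i, φ (c j) * x ^ (j : ℕ))
        = ∏ c : Fin i → F, (u - φ a - x * ∑ j : Fin i, φ (c j) * x ^ (j : ℕ)) := by
    intro a
    have hcard : Fintype.card (Fin i → F) = Fintype.card F ^ i := by
      simp [Fintype.card_fun]
    calc (x : K) ^ Q ^ i
          * ∏ c : Fin i → F, ((u - φ a) * x⁻¹ - ∑ j : Fin i, φ (c j) * x ^ (j : ℕ))
        = ∏ c : Fin i → F, ((x:K) * ((u - φ a) * x⁻¹ - ∑ j : Fin i, φ (c j) * x ^ (j : ℕ))) := by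
          rw [Finset.prod_mul_distrib, Finset.prod_const, Finset.card_univ, hcard]
      _ = ∏ c : Fin i → F, (u - φ a - x * ∑ j : Fin i, φ (c j) * x ^ (j : ℕ)) := by
          refine Finset.prod_congr rfl fun c _ => ?_
          field_simp
  simp only [step]
  rw [← Fintype.prod_prod_type']
  apply Fintype.prod_equiv (Fin.consEquiv (fun _ => F)).symm
  intro c
  simp only [Fin.consEquiv, Equiv.coe_fn_symm_mk, Fin.tail]
  rw [Fin.sum_univ_succ]
  simp only [Fin.val_zero, pow_zero, mul_one, Fin.val_succ]
  rw [Finset.mul_sum]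
  rw [show (∑ j : Fin i, φ (c j.succ) * x ^ ((j:ℕ)+1))
      = ∑ j : Fin i, x * (φ (c j.succ) * x ^ (j:ℕ)) from
    Finset.sum_congr rfl (fun j _ => by ring)]
  ring

theorem Erec_of (i : ℕ)
    (hadd : ∀ u v : K, (carlitzE F x i).eval (u + v)
      = (carlitzE F x i).eval u + (carlitzE F x i).eval v)
    (hmul : ∀ (a : F) (u : K), (carlitzE F x i).eval (φ a * u)
      = φ a * (carlitzE F x i).eval u) (u : K) :
    (carlitzE F x (i+1)).eval u
      = ((carlitzE F x i).eval u) ^ Q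
        - ((carlitzE F x i).eval (x ^ i)) ^ (Q - 1) * (carlitzE F x i).eval u := by
  rw [decomp1]
  have h : ∀ a : F, (carlitzE F x i).eval (u - φ a * x ^ i)
      = (carlitzE F x i).eval u - φ a * (carlitzE F x i).eval (x ^ i) := by
    intro a
    have h1 : u - φ a * x ^ i = u + φ (-a) * (x ^ i) := by
      rw [map_neg]; ring
    rw [h1, hadd, hmul, map_neg]; ring
  simp only [h]
  exact prod_lin_mul _ _

theorem E_add_mul (i : ℕ) :
    (∀ u v : K, (carlitzE F x i).eval (u + v)
      = (carlitzE F x i).eval u + (carlitzE F x i).eval v)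
    ∧ (∀ (a : F) (u : K), (carlitzE F x i).eval (φ a * u)
      = φ a * (carlitzE F x i).eval u) := by
  induction i with
  | zero => simp [E_zero]
  | succ i ih =>
    obtain ⟨hadd, hmul⟩ := ih
    have hrec := Erec_of i hadd hmul
    constructor
    · intro u v
      rw [hrec, hrec, hrec, hadd, frob_add1]
      ring
    · intro a u
      rw [hrec, hrec, hmul, mul_pow, algebraMap_pow_card]
      ring

theorem Erec (i : ℕ) (u : K) :
    (carlitzE F x (i+1)).eval u
      = ((carlitzE F x i).eval u) ^ Q
        - ((carlitzE F x i).eval (x ^ i)) ^ (Q - 1) * (carlitzE F x i).eval u :=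
  Erec_of i (E_add_mul i).1 (E_add_mul i).2 u

theorem brk_ne_zero (j : ℕ) (hj : j ≠ 0) : brk Q x j ≠ (0 : K) := by
  have h2 : 1 < Q := Fintype.one_lt_card
  have hne := FiniteField.X_pow_card_pow_sub_X_ne_zero F hj h2
  have : brk Q x j = algebraMap (Polynomial F) (RatFunc F) (X ^ Q ^ j - X) := by
    rw [map_sub, map_pow, RatFunc.algebraMap_X, brk]
  rw [this]
  simpa using (RatFunc.algebraMap_ne_zero hne)

theorem Dfac_ne_zero (i : ℕ) : Dfac Q x i ≠ (0 : K) := by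
  induction i with
  | zero => simp [Dfac]
  | succ i ih =>
    exact mul_ne_zero (brk_ne_zero (i+1) (by omega)) (pow_ne_zero _ ih)

theorem geom (r i : ℕ) :
    (∑ j ∈ Finset.range (i+1), (r+1) ^ j) * r + 1 = (r+1) ^ (i+1) := by
  induction i with
  | zero => simp
  | succ i ih =>
    rw [Finset.sum_range_succ]
    calc ((∑ j ∈ Finset.range (i+1), (r+1) ^ j) + (r+1)^(i+1)) * r + 1
        = ((∑ j ∈ Finset.range (i+1), (r+1) ^ j) * r + 1) + (r+1)^(i+1) * r := by
          ring
      _ = (r+1)^(i+1) + (r+1)^(i+1) * r := by rw [ih]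
      _ = (r+1) ^ (i+1+1) := by ring

theorem dDelta (i : ℕ) :
    (carlitzE F x i).eval (x ^ i) = Dfac Q x i
    ∧ (carlitzE F x i).eval x⁻¹ * x ^ (∑ j ∈ Finset.range (i+1), Q ^ j)
        = (-1 : K) ^ i * Dfac Q x i := by
  have hx : (x : K) ≠ 0 := RatFunc.X_ne_zero
  obtain ⟨r, hr⟩ : ∃ r, Q = r + 1 :=
    ⟨Q - 1, by have := Fintype.one_lt_card (α := F); omega⟩
  have hr1 : Q - 1 = r := by omega
  induction i with
  | zero =>
    constructor
    · simp [E_zero, Dfac]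
    · simp [E_zero, Dfac, inv_mul_cancel₀ hx]
  | succ i ih =>
    obtain ⟨hd, hδ⟩ := ih
    set d := (carlitzE F x i).eval (x ^ i) with hdd
    set δ := (carlitzE F x i).eval x⁻¹ with hδδ
    set D := Dfac Q x i with hD
    set σ := ∑ j ∈ Finset.range (i+1), Q ^ j with hσ
    set P := (x : K) ^ σ with hP
    -- key exponent identity
    have hgeom : σ * r + 1 = Q ^ (i+1) := by
      rw [hσ, hr]; exact geom r i
    have hxp : (x : K) ^ Q ^ (i+1) = P ^ r * x := by
      rw [hP, ← pow_mul, ← pow_succ, hgeom]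
    have hm1 : ((-1 : K)) ^ r = 1 := by rw [← hr1]; exact frob_neg_one_sub
    have hδ' : δ ^ r * P ^ r = D ^ r := by
      have h := congrArg (· ^ r) hδ
      rw [mul_pow, mul_pow, pow_right_comm ((-1:K)) i r, hm1, one_pow, one_mul] at h
      exact h
    -- the element-level factor computation
    have hfac : ∀ a : F, (carlitzE F x i).eval ((x ^ (i+1) - φ a) * x⁻¹)
        = d - φ a * δ := by
      intro a
      have h1 : ((x:K) ^ (i+1) - φ a) * x⁻¹ = x ^ i + φ (-a) * x⁻¹ := by
        rw [map_neg]; field_simp; ring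
      rw [h1, (E_add_mul i).1, (E_add_mul i).2, map_neg]; ring
    -- d part
    have hdnew : (carlitzE F x (i+1)).eval (x ^ (i+1))
        = (x:K) ^ Q ^ (i+1) * (d ^ Q - δ ^ (Q-1) * d) := by
      rw [decomp2]
      simp only [hfac]
      rw [Finset.prod_mul_distrib, Finset.prod_const, Finset.card_univ, prod_lin_mul,
        ← pow_mul, ← pow_succ]
    rw [hxp, hr1, hr, hd] at hdnew
    have hdgoal : (carlitzE F x (i+1)).eval (x ^ (i+1)) = Dfac Q x (i+1) := by
      rw [hdnew]
      show P ^ r * x * (D ^ (r+1) - δ ^ r * D) = Dfac Q x (i+1)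
      simp only [Dfac, brk, ← hD]
      rw [hxp, hr]
      linear_combination (-(x * D) : K) * hδ'
    refine ⟨hdgoal, ?_⟩
    -- δ part
    have hσ' : (∑ j ∈ Finset.range (i+1+1), Q ^ j) = σ * Q + 1 := by
      rw [Finset.sum_range_succ', hσ, Finset.sum_mul]
      simp [pow_succ]
    rw [Erec, hσ', ← hdd, ← hδδ, hd]
    simp only [Dfac, brk, ← hD]
    have hxq : (x:K) ^ (σ * Q + 1) = P ^ Q * x := by
      rw [hP, pow_add, pow_mul, pow_one]
    rw [hxq, hxp, hr1, hr]
    have hs : ((-1:K)) ^ (i+1) = -((-1:K)) ^ i := by rw [pow_succ]; ring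
    rw [hs]
    set s := ((-1:K)) ^ i with hss
    linear_combination (x * δ * P) * hδ' + (x * (1 - P^r) * D^r) * hδ

theorem brk_add (a b : ℕ) :
    brk Q x (a + b) = brk Q x b + ((brk Q x a : K)) ^ Q ^ b := by
  simp only [brk]
  rw [frob_sub, ← pow_mul, ← pow_add]
  ring

theorem kBinom_zero (i : ℕ) : kBinom Q x i 0 = (1 : K) := by
  simp only [kBinom, Dfac, Nat.sub_zero, pow_zero, pow_one, one_mul]
  exact div_self (Dfac_ne_zero (F := F) i)

theorem kBinom_self (i : ℕ) : kBinom Q x i i = (1 : K) := by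
  simp only [kBinom, Nat.sub_self, Dfac, one_pow, mul_one]
  exact div_self (Dfac_ne_zero (F := F) i)

theorem pascalB (i n : ℕ) :
    (kBinom Q x i n) ^ Q * ((Dfac Q x n) ^ (Q-1) * ((Dfac Q x (i-n)) ^ (Q-1)) ^ Q ^ n)
      = (Dfac Q x i) ^ (Q-1) * kBinom Q x i n := by
  obtain ⟨r, hr⟩ : ∃ r, Q = r + 1 :=
    ⟨Q - 1, by have := Fintype.one_lt_card (α := F); omega⟩
  have hr1 : Q - 1 = r := by omega
  have h0 : Dfac Q x n * (Dfac Q x (i-n)) ^ Q ^ n ≠ (0:K) :=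
    mul_ne_zero (Dfac_ne_zero (F := F) n) (pow_ne_zero _ (Dfac_ne_zero (F := F) (i-n)))
  simp only [kBinom]
  rw [div_pow, div_mul_eq_mul_div, mul_div_assoc']
  rw [div_eq_div_iff (pow_ne_zero _ h0) h0]
  rw [hr1, hr]
  ring

theorem pascalA (i n : ℕ) (hn : n + 1 ≤ i) :
    kBinom Q x (i+1) (n+1)
      = (kBinom Q x i n) ^ Q + (kBinom Q x i (n+1)) ^ Q * (Dfac Q x (n+1)) ^ (Q-1) := by
  obtain ⟨r, hr⟩ : ∃ r, Q = r + 1 :=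
    ⟨Q - 1, by have := Fintype.one_lt_card (α := F); omega⟩
  have hr1 : Q - 1 = r := by omega
  obtain ⟨k, hk⟩ : ∃ k, i - n = k + 1 := ⟨i - n - 1, by omega⟩
  have h1 : i + 1 - (n+1) = k + 1 := by omega
  have h2 : i - (n+1) = k := by omega
  have hbrk : brk Q x (i+1) = brk Q x (n+1) + ((brk Q x (k+1) : K)) ^ Q ^ (n+1) := by
    rw [show i + 1 = (k+1) + (n+1) by omega]
    exact brk_add _ _
  have hA := Dfac_ne_zero (F := F) n
  have hB := Dfac_ne_zero (F := F) k
  have hDi := Dfac_ne_zero (F := F) i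
  have hbn : brk Q x (n+1) ≠ (0:K) := brk_ne_zero (n+1) (by omega)
  have hbk : brk Q x (k+1) ≠ (0:K) := brk_ne_zero (k+1) (by omega)
  have e1 : Dfac Q x n * (Dfac Q x (k+1)) ^ Q ^ n ≠ (0:K) :=
    mul_ne_zero hA (pow_ne_zero _ (Dfac_ne_zero (F := F) (k+1)))
  have e2 : Dfac Q x (n+1) * (Dfac Q x k) ^ Q ^ (n+1) ≠ (0:K) :=
    mul_ne_zero (Dfac_ne_zero (F := F) (n+1)) (pow_ne_zero _ hB)
  have e3 : Dfac Q x (n+1) * (Dfac Q x (k+1)) ^ Q ^ (n+1) ≠ (0:K) :=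
    mul_ne_zero (Dfac_ne_zero (F := F) (n+1)) (pow_ne_zero _ (Dfac_ne_zero (F := F) (k+1)))
  simp only [kBinom, h1, h2, hk]
  rw [div_pow, div_pow, div_mul_eq_mul_div, div_add_div _ _ (pow_ne_zero Q e1) (pow_ne_zero Q e2)]
  rw [div_eq_div_iff e3 (mul_ne_zero (pow_ne_zero Q e1) (pow_ne_zero Q e2))]
  rw [show Dfac Q x (i+1) = brk Q x (i+1) * (Dfac Q x i) ^ Q from rfl,
      show Dfac Q x (n+1) = brk Q x (n+1) * (Dfac Q x n) ^ Q from rfl,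
      show Dfac Q x (k+1) = brk Q x (k+1) * (Dfac Q x k) ^ Q from rfl,
      hbrk, hr1]
  rw [hr]
  ring

theorem main (i : ℕ) (s t : RatFunc F) :
    (carlitzE F x i).eval (s * t)
      = ∑ n ∈ Finset.range (i + 1),
          kBinom Q x i n * (carlitzE F x n).eval t
            * ((carlitzE F x (i - n)).eval s) ^ Q ^ n := by
  induction i with
  | zero =>
    rw [Finset.sum_range_one, kBinom_zero]
    simp only [Nat.sub_zero, pow_zero, pow_one, E_zero, one_mul]
    ring
  | succ i IH =>
    have hErec : ∀ (m : ℕ) (u : K), (carlitzE F x (m+1)).eval u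
        = ((carlitzE F x m).eval u) ^ Q - (Dfac Q x m) ^ (Q-1) * (carlitzE F x m).eval u :=
      fun m u => by rw [Erec, (dDelta m).1]
    have hpow : ∀ (m : ℕ) (u : K), ((carlitzE F x m).eval u) ^ Q
        = (carlitzE F x (m+1)).eval u + (Dfac Q x m) ^ (Q-1) * (carlitzE F x m).eval u := by
      intro m u; rw [hErec]; ring
    -- abbreviations as plain notation
    have step1 : ∀ n ∈ Finset.range (i+1),
        (kBinom Q x i n * (carlitzE F x n).eval t * ((carlitzE F x (i - n)).eval s) ^ Q ^ n) ^ Q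
        = ((kBinom Q x i n) ^ Q * (carlitzE F x (n+1)).eval t
              * ((carlitzE F x (i - n)).eval s) ^ Q ^ (n+1)
          + (kBinom Q x i n) ^ Q * (Dfac Q x n) ^ (Q-1) * (carlitzE F x n).eval t
              * ((carlitzE F x (i + 1 - n)).eval s) ^ Q ^ n)
          + (Dfac Q x i) ^ (Q-1)
            * (kBinom Q x i n * (carlitzE F x n).eval t
                * ((carlitzE F x (i - n)).eval s) ^ Q ^ n) := by
      intro n hn
      have hni : n ≤ i := by simpa [Nat.lt_succ_iff] using hn
      have hin : i - n + 1 = i + 1 - n := by omega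
      have f1 := hpow n t
      have f2 : (((carlitzE F x (i - n)).eval s) ^ Q ^ n) ^ Q
          = ((carlitzE F x (i - n)).eval s) ^ Q ^ (n+1) := by
        rw [← pow_mul, ← pow_succ]
      have f3 : (((carlitzE F x (i - n)).eval s) ^ Q ^ n) ^ Q
          = ((carlitzE F x (i + 1 - n)).eval s) ^ Q ^ n
            + ((Dfac Q x (i - n) ^ (Q-1)) ^ Q ^ n)
              * ((carlitzE F x (i - n)).eval s) ^ Q ^ n := by
        rw [pow_right_comm ((carlitzE F x (i - n)).eval s) (Q ^ n) Q, hpow (i - n) s, hin,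
          frob_add ((carlitzE F x (i + 1 - n)).eval s)
            ((Dfac Q x (i - n)) ^ (Q-1) * (carlitzE F x (i - n)).eval s) n, mul_pow]
      have hB := pascalB (F := F) i n
      rw [mul_pow, mul_pow]
      linear_combination ((kBinom Q x i n) ^ Q * (((carlitzE F x (i - n)).eval s) ^ Q ^ n) ^ Q) * f1
        + ((kBinom Q x i n) ^ Q * (carlitzE F x (n+1)).eval t) * f2
        + ((kBinom Q x i n) ^ Q * (Dfac Q x n) ^ (Q-1) * (carlitzE F x n).eval t) * f3
        + ((carlitzE F x n).eval t * ((carlitzE F x (i - n)).eval s) ^ Q ^ n) * hB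
    have frob_sum1 : (∑ n ∈ Finset.range (i+1),
          kBinom Q x i n * (carlitzE F x n).eval t
            * ((carlitzE F x (i - n)).eval s) ^ Q ^ n) ^ Q
        = ∑ n ∈ Finset.range (i+1),
            (kBinom Q x i n * (carlitzE F x n).eval t
              * ((carlitzE F x (i - n)).eval s) ^ Q ^ n) ^ Q := by
      simpa using frob_sum (Finset.range (i+1))
        (fun n => kBinom Q x i n * (carlitzE F x n).eval t
          * ((carlitzE F x (i - n)).eval s) ^ Q ^ n) 1
    -- LHS computation
    have hLHS : (carlitzE F x (i+1)).eval (s * t)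
        = (∑ n ∈ Finset.range (i+1),
            (kBinom Q x i n) ^ Q * (carlitzE F x (n+1)).eval t
              * ((carlitzE F x (i - n)).eval s) ^ Q ^ (n+1))
          + ∑ n ∈ Finset.range (i+1),
            (kBinom Q x i n) ^ Q * (Dfac Q x n) ^ (Q-1) * (carlitzE F x n).eval t
              * ((carlitzE F x (i + 1 - n)).eval s) ^ Q ^ n := by
      rw [hErec i (s*t), IH, frob_sum1, Finset.mul_sum,
        Finset.sum_congr rfl step1, Finset.sum_add_distrib, Finset.sum_add_distrib]
      ring
    rw [hLHS]
    -- RHS rearrangement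
    rw [Finset.sum_range_succ'
      (fun n => kBinom Q x (i+1) n * (carlitzE F x n).eval t
        * ((carlitzE F x (i + 1 - n)).eval s) ^ Q ^ n) (i+1)]
    rw [Finset.sum_range_succ
      (fun n => kBinom Q x (i+1) (n+1) * (carlitzE F x (n+1)).eval t
        * ((carlitzE F x (i + 1 - (n+1))).eval s) ^ Q ^ (n+1)) i]
    rw [Finset.sum_range_succ
      (fun n => (kBinom Q x i n) ^ Q * (carlitzE F x (n+1)).eval t
        * ((carlitzE F x (i - n)).eval s) ^ Q ^ (n+1)) i]
    rw [Finset.sum_range_succ'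
      (fun n => (kBinom Q x i n) ^ Q * (Dfac Q x n) ^ (Q-1) * (carlitzE F x n).eval t
        * ((carlitzE F x (i + 1 - n)).eval s) ^ Q ^ n) i]
    have hga : ∀ n ∈ Finset.range i,
        kBinom Q x (i+1) (n+1) * (carlitzE F x (n+1)).eval t
            * ((carlitzE F x (i + 1 - (n+1))).eval s) ^ Q ^ (n+1)
        = (kBinom Q x i n) ^ Q * (carlitzE F x (n+1)).eval t
            * ((carlitzE F x (i - n)).eval s) ^ Q ^ (n+1)
          + (kBinom Q x i (n+1)) ^ Q * (Dfac Q x (n+1)) ^ (Q-1) * (carlitzE F x (n+1)).eval t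
            * ((carlitzE F x (i + 1 - (n+1))).eval s) ^ Q ^ (n+1) := by
      intro n hn
      have hni : n + 1 ≤ i := by simpa [Nat.lt_succ_iff] using hn
      have h4 : i + 1 - (n+1) = i - n := by omega
      rw [pascalA i n hni, h4]
      ring
    rw [Finset.sum_congr rfl hga, Finset.sum_add_distrib]
    -- boundary terms
    have hgl : kBinom Q x (i+1) (i+1) * (carlitzE F x (i+1)).eval t
          * ((carlitzE F x (i + 1 - (i+1))).eval s) ^ Q ^ (i+1)
        = (kBinom Q x i i) ^ Q * (carlitzE F x (i+1)).eval t
          * ((carlitzE F x (i - i)).eval s) ^ Q ^ (i+1) := by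
      rw [kBinom_self, kBinom_self, Nat.sub_self, Nat.sub_self]
      ring
    have hg0 : kBinom Q x (i+1) 0 * (carlitzE F x 0).eval t
          * ((carlitzE F x (i + 1 - 0)).eval s) ^ Q ^ 0
        = (kBinom Q x i 0) ^ Q * (Dfac Q x 0) ^ (Q-1) * (carlitzE F x 0).eval t
          * ((carlitzE F x (i + 1 - 0)).eval s) ^ Q ^ 0 := by
      rw [kBinom_zero, kBinom_zero]
      show (1:K) * _ * _ = 1 ^ Q * (1:K) ^ (Q-1) * _ * _
      rw [one_pow, one_pow]
      ring
    rw [hgl, hg0]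
    ring

end
end CarlitzAux

/-- The `K`-binomial identity for the Carlitz polynomials:
`e_i(st) = Σ_{n=0}^{i} (i choose n)_K e_n(t) (e_{i-n}(s))^{q^n}`,
as an identity in two variables `s, t` over `F_q(x)`. -/
theorem carlitzE_K_binomial {F : Type*} [Field F] [Fintype F]
    (q : ℕ) (hq : q = Fintype.card F) (i : ℕ) (s t : RatFunc F) :
    (carlitzE F (RatFunc.X : RatFunc F) i).eval (s * t)
      = ∑ n ∈ Finset.range (i + 1),
          kBinom q (RatFunc.X : RatFunc F) i n
            * (carlitzE F (RatFunc.X : RatFunc F) n).eval t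
            * ((carlitzE F (RatFunc.X : RatFunc F) (i - n)).eval s) ^ q ^ n := by
  subst hq
  exact CarlitzAux.main i s t
end
end

section
/- If {P_n} is the basic sequence of a delta operator δ = τ^{-1}δ_0, then δ_0^{(l)} P_j = (D_j / D_{j-l}^{q^l}) P_{j-l}^{q^l} for all l ≤ j, where δ_0^{(l)} = τ^l δ^l. -/
noncomputable section

/-- The Frobenius `τ` on `F_q`-linear polynomials `Σ a_k t^{q^k}` (encoded as `ℕ →₀ L`). -/
def frob {L : Type*} [CommRing L] (q : ℕ) (u : ℕ →₀ L) : ℕ →₀ L :=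
  u.sum fun k a => Finsupp.single (k + 1) (a ^ q)

/-- Evaluation of the `F_q`-linear polynomial `Σ a_k t^{q^k}` at `t = 1`. -/
def eval1 {L : Type*} [CommRing L] (u : ℕ →₀ L) : L :=
  u.sum fun _ a => a

section Aux

variable {L : Type*} [CommRing L]

/-- Diagonal operator with eigenvalue `e n` on the `n`-th basis vector. -/
def diagOp (e : ℕ → L) : (ℕ →₀ L) →ₗ[L] (ℕ →₀ L) :=
  Finsupp.lsum L fun n => e n • Finsupp.lsingle n

lemma diagOp_single (e : ℕ → L) (n : ℕ) (a : L) :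
    diagOp e (Finsupp.single n a) = Finsupp.single n (e n * a) := by
  simp [diagOp, Finsupp.smul_single']

lemma diagOp_congr (e e' : ℕ → L) (h : ∀ n, e n = e' n) (u : ℕ →₀ L) :
    diagOp e u = diagOp e' u := by
  have : e = e' := funext h
  rw [this]

variable (q : ℕ) (hq0 : q ≠ 0) (hadd : ∀ a b : L, (a + b) ^ q = a ^ q + b ^ q)

lemma frob_zero : frob q (0 : ℕ →₀ L) = 0 := Finsupp.sum_zero_index

include hq0 in
lemma frob_single (n : ℕ) (a : L) :
    frob q (Finsupp.single n a) = Finsupp.single (n + 1) (a ^ q) :=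
  Finsupp.sum_single_index (by rw [zero_pow hq0, Finsupp.single_zero])

include hadd hq0 in
lemma frob_add (u v : ℕ →₀ L) : frob q (u + v) = frob q u + frob q v := by
  unfold frob
  rw [Finsupp.sum_add_index]
  · intro k _
    rw [zero_pow hq0, Finsupp.single_zero]
  · intro k _ a b
    rw [hadd, Finsupp.single_add]

include hq0 in
lemma frob_smul (a : L) (u : ℕ →₀ L) : frob q (a • u) = a ^ q • frob q u := by
  unfold frob
  rw [Finsupp.sum_smul_index (fun i => by rw [zero_pow hq0, Finsupp.single_zero]),
    Finsupp.smul_sum]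
  exact Finsupp.sum_congr fun k _ => by rw [mul_pow, Finsupp.smul_single']

include hq0 in
lemma frob_iter_smul (l : ℕ) (a : L) (u : ℕ →₀ L) :
    (frob q)^[l] (a • u) = a ^ q ^ l • (frob q)^[l] u := by
  induction l generalizing a u with
  | zero => simp
  | succ l ih =>
    rw [Function.iterate_succ_apply, Function.iterate_succ_apply,
      frob_smul q hq0, ih, ← pow_mul, ← pow_succ']

include hq0 hadd in
lemma frob_diagOp (e : ℕ → L) (u : ℕ →₀ L) :
    frob q (diagOp e u) = diagOp (fun n => e (n - 1) ^ q) (frob q u) := by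
  induction u using Finsupp.induction with
  | zero => rw [map_zero, frob_zero, map_zero]
  | single_add n a u _ _ ih =>
    rw [map_add, frob_add q hq0 hadd, frob_add q hq0 hadd, map_add, ih,
      diagOp_single, frob_single q hq0, frob_single q hq0, diagOp_single, mul_pow]
    simp

include hq0 hadd in
lemma frob_iter_diagOp (l : ℕ) (e : ℕ → L) (u : ℕ →₀ L) :
    (frob q)^[l] (diagOp e u)
      = diagOp (fun n => e (n - l) ^ q ^ l) ((frob q)^[l] u) := by
  induction l generalizing e u with
  | zero => simpa using diagOp_congr _ _ (fun n => by simp) u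
  | succ l ih =>
    rw [Function.iterate_succ_apply, Function.iterate_succ_apply,
      frob_diagOp q hq0 hadd, ih]
    exact diagOp_congr _ _ (fun n => by rw [← pow_mul, ← pow_succ', Nat.sub_sub]) _

end Aux

section NZ

variable {F : Type*} [Field F]

lemma brk_ne_zero (q : ℕ) (hq2 : 2 ≤ q) (i : ℕ) (hi : 1 ≤ i) :
    brk q (HahnSeries.single (1 : ℤ) (1 : F)) i ≠ 0 := by
  have hpow : (HahnSeries.single (1 : ℤ) (1 : F)) ^ q ^ i
      = HahnSeries.single ((q ^ i : ℕ) : ℤ) (1 : F) := by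
    rw [HahnSeries.single_pow, one_pow, nsmul_eq_mul, mul_one]
  have hne : ((q ^ i : ℕ) : ℤ) ≠ 1 := by
    have : 2 ≤ q ^ i := le_trans hq2 (Nat.le_self_pow (by omega) q)
    omega
  intro h
  have h1 : (HahnSeries.single ((q ^ i : ℕ) : ℤ) (1 : F)).coeff ((q ^ i : ℕ) : ℤ)
      = (HahnSeries.single (1 : ℤ) (1 : F)).coeff ((q ^ i : ℕ) : ℤ) := by
    rw [brk, sub_eq_zero, hpow] at h
    rw [h]
  rw [HahnSeries.coeff_single_same, HahnSeries.coeff_single_of_ne hne] at h1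
  exact one_ne_zero h1

lemma Dfac_ne_zero (q : ℕ) (hq2 : 2 ≤ q) (i : ℕ) :
    Dfac q (HahnSeries.single (1 : ℤ) (1 : F)) i ≠ 0 := by
  induction i with
  | zero => exact one_ne_zero
  | succ i ih =>
    exact mul_ne_zero (brk_ne_zero q hq2 (i + 1) (by omega)) (pow_ne_zero _ ih)

end NZ

/-- If `{P_n}` is the basic sequence of a delta operator `δ = τ^{-1} δ₀` (so that
`τ ∘ δ = δ₀` and `δ₀ P_n = [n] P_{n-1}^q`), then `δ₀^{(l)} P_j = (D_j / D_{j-l}^{q^l}) P_{j-l}^{q^l}`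
for all `l ≤ j`, where `δ₀^{(l)} = τ^l δ^l`. -/
theorem delta0_iter_basic {F L : Type*} [Field F] [Fintype F] [Field L]
    [Algebra (LaurentSeries F) L]
    (p : ℕ) [Fact p.Prime] [CharP F p] [ExpChar L p] [PerfectRing L p]
    (q : ℕ) (hq : q = Fintype.card F)
    (c : ℕ → L) (hc0 : c 0 = 0) (hc : ∀ n, 1 ≤ n → c n ≠ 0)
    (δ₀ : (ℕ →₀ L) →ₗ[L] (ℕ →₀ L))
    (hδ₀ : ∀ n : ℕ, δ₀ (Finsupp.single n 1) = c n • Finsupp.single n 1)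
    (δ : (ℕ →₀ L) → (ℕ →₀ L)) (hδ : ∀ u, frob q (δ u) = δ₀ u)
    (P : ℕ → (ℕ →₀ L))
    (hPdeg : ∀ n : ℕ, P n n ≠ 0 ∧ ∀ k, n < k → P n k = 0)
    (hP01 : eval1 (P 0) = 1) (hP1 : ∀ n, 1 ≤ n → eval1 (P n) = 0)
    (hP0 : δ₀ (P 0) = 0)
    (hPn : ∀ n, 1 ≤ n →
      δ₀ (P n)
        = algebraMap (LaurentSeries F) L
            (brk q (HahnSeries.single (1 : ℤ) (1 : F)) n) • frob q (P (n - 1))) :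
    ∀ l j : ℕ, l ≤ j →
      (frob q)^[l] (δ^[l] (P j))
        = algebraMap (LaurentSeries F) L
            (Dfac q (HahnSeries.single (1 : ℤ) (1 : F)) j
              / (Dfac q (HahnSeries.single (1 : ℤ) (1 : F)) (j - l)) ^ q ^ l)
          • (frob q)^[l] (P (j - l)) := by
  obtain ⟨m, hp, hcard⟩ := FiniteField.card F p
  have hq0 : q ≠ 0 := by rw [hq]; exact Fintype.card_ne_zero
  have hq2 : 2 ≤ q := by rw [hq]; exact Fintype.one_lt_card
  have hadd : ∀ a b : L, (a + b) ^ q = a ^ q + b ^ q := by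
    intro a b
    rw [hq, hcard]
    exact add_pow_expChar_pow a b p m
  set x : LaurentSeries F := HahnSeries.single (1 : ℤ) (1 : F) with hx
  set φ : LaurentSeries F →+* L := (algebraMap (LaurentSeries F) L : LaurentSeries F →+* L) with hφ
  have hD : ∀ i, Dfac q x i ≠ 0 := Dfac_ne_zero q hq2
  have hB : ∀ i, 1 ≤ i → brk q x i ≠ 0 := brk_ne_zero q hq2
  have hdiag : ∀ u, δ₀ u = diagOp c u := by
    intro u
    have he : δ₀ = diagOp c := Finsupp.lhom_ext fun n a => by
      have h1 : Finsupp.single n a = a • Finsupp.single n (1 : L) := by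
        rw [Finsupp.smul_single', mul_one]
      rw [h1, map_smul, map_smul, hδ₀, diagOp_single, Finsupp.smul_single']
    rw [he]
  intro l
  induction l with
  | zero =>
    intro j _
    simp only [Function.iterate_zero, id_eq, Nat.sub_zero, pow_zero, pow_one]
    rw [div_self (hD j), map_one, one_smul]
  | succ l ih =>
    intro j hj
    have hn1 : 1 ≤ j - l := by omega
    have key := ih j (by omega)
    set k : ℕ := j - l - 1 with hk
    have hjk : j - (l + 1) = k := by omega
    have hjl : j - l = k + 1 := by omega
    have hsplit : Dfac q x (j - l) = brk q x (j - l) * Dfac q x k ^ q := by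
      rw [hjl]; rfl
    have hfrac : Dfac q x j / Dfac q x (j - l) ^ q ^ l * brk q x (j - l) ^ q ^ l
        = Dfac q x j / Dfac q x (j - (l + 1)) ^ q ^ (l + 1) := by
      rw [hjk, hsplit, mul_pow, ← pow_mul, ← pow_succ']
      have hb : brk q x (j - l) ^ q ^ l ≠ 0 := pow_ne_zero _ (hB _ hn1)
      have hd : Dfac q x k ^ q ^ (l + 1) ≠ 0 := pow_ne_zero _ (hD _)
      field_simp
    calc (frob q)^[l + 1] (δ^[l + 1] (P j))
        = (frob q)^[l] (frob q (δ (δ^[l] (P j)))) := by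
          rw [Function.iterate_succ_apply' δ, Function.iterate_succ_apply (frob q)]
      _ = (frob q)^[l] (diagOp c (δ^[l] (P j))) := by rw [hδ, hdiag]
      _ = diagOp (fun n => c (n - l) ^ q ^ l) ((frob q)^[l] (δ^[l] (P j))) :=
          frob_iter_diagOp q hq0 hadd l c _
      _ = φ (Dfac q x j / Dfac q x (j - l) ^ q ^ l) •
            diagOp (fun n => c (n - l) ^ q ^ l) ((frob q)^[l] (P (j - l))) := by
          rw [key, map_smul]
      _ = φ (Dfac q x j / Dfac q x (j - l) ^ q ^ l) •
            (frob q)^[l] (diagOp c (P (j - l))) := by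
          rw [frob_iter_diagOp q hq0 hadd]
      _ = φ (Dfac q x j / Dfac q x (j - l) ^ q ^ l) •
            (frob q)^[l] (φ (brk q x (j - l)) • frob q (P (j - l - 1))) := by
          rw [← hdiag, hPn (j - l) hn1]
      _ = φ (Dfac q x j / Dfac q x (j - l) ^ q ^ l) •
            (φ (brk q x (j - l)) ^ q ^ l • (frob q)^[l + 1] (P (j - (l + 1)))) := by
          rw [frob_iter_smul q hq0, ← Function.iterate_succ_apply (frob q), Nat.sub_sub]
      _ = φ (Dfac q x j / Dfac q x (j - (l + 1)) ^ q ^ (l + 1)) •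
            (frob q)^[l + 1] (P (j - (l + 1))) := by
          rw [smul_smul, ← map_pow, ← map_mul, hfrac]

end
end
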